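/- Let p be a strictly positive probability distribution over discrete variables partitioned into blocks C_1, …, C_m with a 'parent' assignment Pa(C_i) ⊆ C_1 ∪ … ∪ C_{i−1}. If p(V) = Π_i p(C_i | Pa(C_i)) and additionally p(D | Pa(C_i)) = p(D | Pa(D)) for every D ⊆ C_i (where Pa(D) ⊆ Pa(C_i)), then for every D ⊆ C_i: D ⊥_p (C_1 ∪ … ∪ C_{i−1}) \ Pa(D) | Pa(D). -/

import Mathlib

open scoped Classical

/-- The marginal of a distribution `p` on the coordinates in `S`, evaluated at the
configuration `x` (i.e. the probability that the coordinates in `S` take the values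
they take in `x`). -/
noncomputable def marginal {V : Type*} [Fintype V] {X : V → Type*} [∀ v, Fintype (X v)]
    (p : (∀ v, X v) → ℝ) (S : Finset V) (x : ∀ v, X v) : ℝ :=
  ∑ y : ∀ v, X v, if ∀ v ∈ S, y v = x v then p y else 0

/-- Conditional independence `A ⊥_p B | S` of the sets of coordinates `A` and `B`
given `S`, expressed multiplicatively via marginals:
`p(a,b,s)·p(s) = p(a,s)·p(b,s)`. -/
def CondIndep {V : Type*} [Fintype V] {X : V → Type*} [∀ v, Fintype (X v)]
    (p : (∀ v, X v) → ℝ) (A B S : Finset V) : Prop :=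
  ∀ x : ∀ v, X v,
    marginal p (A ∪ B ∪ S) x * marginal p S x
      = marginal p (A ∪ S) x * marginal p (B ∪ S) x

section Aux

variable {V : Type*} [Fintype V] {X : V → Type*} [∀ v, Fintype (X v)]

lemma marg_agree (p : (∀ v, X v) → ℝ) (A : Finset V) {x y : ∀ v, X v}
    (h : ∀ v ∈ A, y v = x v) : marginal p A y = marginal p A x := by
  unfold marginal
  refine Finset.sum_congr rfl fun z _ => ?_
  have hiff : (∀ v ∈ A, z v = y v) ↔ (∀ v ∈ A, z v = x v) :=
    forall₂_congr fun v hv => by rw [h v hv]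
  exact if_congr hiff rfl rfl

lemma marg_pos {p : (∀ v, X v) → ℝ} (hpos : ∀ x, 0 < p x) (A : Finset V) (x : ∀ v, X v) :
    0 < marginal p A x := by
  unfold marginal
  have h := Finset.single_le_sum (f := fun y => if (∀ v ∈ A, y v = x v) then p y else 0)
    (fun y _ => by split
                   · exact (hpos y).le
                   · exact le_rfl) (Finset.mem_univ x)
  rw [if_pos (fun v _ => rfl)] at h
  exact lt_of_lt_of_le (hpos x) h

lemma sum_out (p : (∀ v, X v) → ℝ) (C A B : Finset V) (hCA : C ⊆ A)
    (hB : ∀ v, v ∈ B ↔ v ∈ A ∧ v ∉ C) (x : ∀ v, X v) :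
    (∑ y : ∀ v, X v, if (∀ v, v ∉ C → y v = x v) then marginal p A y else 0)
      = marginal p B x := by
  have h1 : ∀ y : ∀ v, X v,
      (if (∀ v, v ∉ C → y v = x v) then marginal p A y else 0)
        = ∑ z : ∀ v, X v,
            if ((∀ v, v ∉ C → y v = x v) ∧ ∀ v ∈ A, z v = y v) then p z else 0 := by
    intro y
    by_cases h : ∀ v, v ∉ C → y v = x v
    · rw [if_pos h]; unfold marginal
      exact Finset.sum_congr rfl fun z _ => if_congr (and_iff_right h).symm rfl rfl
    · rw [if_neg h]
      exact (Finset.sum_eq_zero fun z _ => if_neg fun hh => h hh.1).symm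
  rw [Finset.sum_congr rfl fun y _ => h1 y, Finset.sum_comm]
  unfold marginal
  refine Finset.sum_congr rfl fun z _ => ?_
  by_cases hz : ∀ v ∈ B, z v = x v
  · rw [if_pos hz]
    have hy₀ : ∀ y : ∀ v, X v,
        ((∀ v, v ∉ C → y v = x v) ∧ ∀ v ∈ A, z v = y v) ↔
          y = (fun v => if v ∈ C then z v else x v) := by
      intro y
      constructor
      · rintro ⟨ha, hb⟩
        funext v
        by_cases hvC : v ∈ C
        · simp only [hvC, if_true]; exact (hb v (hCA hvC)).symm
        · simp only [hvC, if_false]; exact ha v hvC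
      · rintro rfl
        constructor
        · intro v hv; simp [hv]
        · intro v hv
          by_cases hvC : v ∈ C
          · simp [hvC]
          · simp only [hvC, if_false]
            exact hz v ((hB v).mpr ⟨hv, hvC⟩)
    rw [Finset.sum_congr rfl fun y _ => if_congr (hy₀ y) rfl rfl]
    rw [Finset.sum_ite_eq' Finset.univ _ (fun _ => p z)]
    simp
  · rw [if_neg hz]
    refine Finset.sum_eq_zero fun y _ => ?_
    refine if_neg ?_
    rintro ⟨ha, hb⟩
    refine hz fun v hv => ?_
    obtain ⟨hvA, hvC⟩ := (hB v).mp hv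
    rw [hb v hvA, ha v hvC]

lemma sum_out_mul (C : Finset V) (x : ∀ v, X v) (f g : (∀ v, X v) → ℝ)
    (hg : ∀ y, (∀ v, v ∉ C → y v = x v) → g y = g x) :
    (∑ y : ∀ v, X v, if (∀ v, v ∉ C → y v = x v) then f y * g y else 0)
      = (∑ y : ∀ v, X v, if (∀ v, v ∉ C → y v = x v) then f y else 0) * g x := by
  rw [Finset.sum_mul]
  refine Finset.sum_congr rfl fun y _ => ?_
  by_cases h : ∀ v, v ∉ C → y v = x v
  · rw [if_pos h, if_pos h, hg y h]
  · rw [if_neg h, if_neg h, zero_mul]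

lemma sum_congr_if (C : Finset V) (x : ∀ v, X v) (f g : (∀ v, X v) → ℝ)
    (h : ∀ y, f y = g y) :
    (∑ y : ∀ v, X v, if (∀ v, v ∉ C → y v = x v) then f y else 0)
      = ∑ y : ∀ v, X v, if (∀ v, v ∉ C → y v = x v) then g y else 0 :=
  Finset.sum_congr rfl fun y _ => by rw [h y]

lemma marg_univ (p : (∀ v, X v) → ℝ) (x : ∀ v, X v) :
    marginal p Finset.univ x = p x := by
  unfold marginal
  have hiff : ∀ y : ∀ v, X v, (∀ v ∈ Finset.univ, y v = x v) ↔ y = x := by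
    intro y; simp [funext_iff]
  rw [Finset.sum_congr rfl fun y _ => if_congr (hiff y) rfl rfl]
  rw [Finset.sum_ite_eq' Finset.univ x p]
  simp

lemma keyP [DecidableEq V] {m : ℕ}
    (p : (∀ v, X v) → ℝ) (hpos : ∀ x, 0 < p x)
    (Cb : Fin m → Finset V)
    (hcover : (Finset.univ : Finset (Fin m)).biUnion Cb = Finset.univ)
    (hdisj : ∀ i j : Fin m, i ≠ j → Disjoint (Cb i) (Cb j))
    (Pa : Finset V → Finset V)
    (hPaC : ∀ i : Fin m,
      Pa (Cb i) ⊆ (Finset.univ.filter (fun j => j < i)).biUnion Cb)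
    (CP : Fin m → Finset V)
    (hCP : ∀ j v, v ∈ CP j ↔ v ∈ Cb j ∨ v ∈ Pa (Cb j))
    (hfac : ∀ x, p x * ∏ i : Fin m, marginal p (Pa (Cb i)) x
        = ∏ i : Fin m, marginal p (CP i) x) :
    ∀ t k, k + t = m → ∀ x,
      marginal p ((Finset.univ.filter fun j : Fin m => (j : ℕ) < k).biUnion Cb) x
          * ∏ j ∈ Finset.univ.filter (fun j : Fin m => (j : ℕ) < k), marginal p (Pa (Cb j)) x
        = ∏ j ∈ Finset.univ.filter (fun j : Fin m => (j : ℕ) < k), marginal p (CP j) x := by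
  intro t
  induction t with
  | zero =>
    intro k hk x
    have hkm : k = m := by omega
    have h1 : (Finset.univ.filter fun j : Fin m => (j : ℕ) < k) = Finset.univ := by
      ext j; simp [hkm, j.isLt]
    rw [h1, hcover]
    rw [marg_univ p x]
    exact hfac x
  | succ t ih =>
    intro k hk x
    have hkm : k < m := by omega
    set kk : Fin m := ⟨k, hkm⟩ with hkkdef
    have IH := ih (k + 1) (by omega)
    have hFins : (Finset.univ.filter fun j : Fin m => (j : ℕ) < k + 1)
        = insert kk (Finset.univ.filter fun j : Fin m => (j : ℕ) < k) := by
      ext j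
      simp only [Finset.mem_insert, Finset.mem_filter, Finset.mem_univ, true_and,
        Nat.lt_succ_iff_lt_or_eq, Fin.ext_iff]
      tauto
    have hknotin : kk ∉ (Finset.univ.filter fun j : Fin m => (j : ℕ) < k) := by simp [hkkdef]
    have hPaNd : ∀ j : Fin m, (j : ℕ) ≤ k → ∀ v ∈ Pa (Cb j), v ∉ Cb kk := by
      intro j hj v hv hvk
      obtain ⟨l, hl, hvl⟩ := Finset.mem_biUnion.mp (hPaC j hv)
      simp only [Finset.mem_filter, Finset.mem_univ, true_and] at hl
      have hlk : l ≠ kk := by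
        intro h
        rw [h] at hl
        have : (kk : ℕ) < (j : ℕ) := hl
        simp only [hkkdef] at this
        omega
      exact (Finset.disjoint_left.mp (hdisj l kk hlk) hvl) hvk
    have hCNd : ∀ j : Fin m, (j : ℕ) < k → ∀ v ∈ Cb j, v ∉ Cb kk := by
      intro j hj v hv hvk
      have hjk : j ≠ kk := by
        intro h; rw [h] at hj; simp [hkkdef] at hj
      exact (Finset.disjoint_left.mp (hdisj j kk hjk) hv) hvk
    have hsub1 : Cb kk ⊆ (Finset.univ.filter fun j : Fin m => (j : ℕ) < k + 1).biUnion Cb :=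
      Finset.subset_biUnion_of_mem Cb (by simp [hkkdef])
    have hB1 : ∀ v, v ∈ (Finset.univ.filter fun j : Fin m => (j : ℕ) < k).biUnion Cb
        ↔ v ∈ (Finset.univ.filter fun j : Fin m => (j : ℕ) < k + 1).biUnion Cb ∧ v ∉ Cb kk := by
      intro v
      simp only [Finset.mem_biUnion, Finset.mem_filter, Finset.mem_univ, true_and]
      constructor
      · rintro ⟨j, hj, hvj⟩
        exact ⟨⟨j, by omega, hvj⟩, hCNd j hj v hvj⟩
      · rintro ⟨⟨j, hj, hvj⟩, hvk⟩
        refine ⟨j, ?_, hvj⟩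
        rcases Nat.lt_succ_iff_lt_or_eq.mp hj with h | h
        · exact h
        · exfalso; apply hvk
          have : j = kk := Fin.ext h
          rwa [this] at hvj
    have A1 := sum_out p (Cb kk)
      ((Finset.univ.filter fun j : Fin m => (j : ℕ) < k + 1).biUnion Cb)
      ((Finset.univ.filter fun j : Fin m => (j : ℕ) < k).biUnion Cb) hsub1 hB1 x
    have hsub2 : Cb kk ⊆ CP kk := fun v hv => (hCP kk v).mpr (Or.inl hv)
    have hB2 : ∀ v, v ∈ Pa (Cb kk) ↔ v ∈ CP kk ∧ v ∉ Cb kk := by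
      intro v
      constructor
      · intro hv; exact ⟨(hCP kk v).mpr (Or.inr hv), hPaNd kk le_rfl v hv⟩
      · rintro ⟨hv, hvk⟩
        rcases (hCP kk v).mp hv with h | h
        · exact absurd h hvk
        · exact h
    have A2 := sum_out p (Cb kk) (CP kk) (Pa (Cb kk)) hsub2 hB2 x
    have hgL : ∀ y, (∀ v, v ∉ Cb kk → y v = x v) →
        (∏ j ∈ Finset.univ.filter (fun j : Fin m => (j : ℕ) < k + 1),
          marginal p (Pa (Cb j)) y)
          = ∏ j ∈ Finset.univ.filter (fun j : Fin m => (j : ℕ) < k + 1),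
              marginal p (Pa (Cb j)) x := by
      intro y hy
      refine Finset.prod_congr rfl fun j hj => marg_agree p _ fun v hv => ?_
      simp only [Finset.mem_filter, Finset.mem_univ, true_and] at hj
      exact hy v (hPaNd j (by omega) v hv)
    have hgR : ∀ y, (∀ v, v ∉ Cb kk → y v = x v) →
        (∏ j ∈ Finset.univ.filter (fun j : Fin m => (j : ℕ) < k),
          marginal p (CP j) y)
          = ∏ j ∈ Finset.univ.filter (fun j : Fin m => (j : ℕ) < k),
              marginal p (CP j) x := by
      intro y hy
      refine Finset.prod_congr rfl fun j hj => marg_agree p _ fun v hv => ?_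
      simp only [Finset.mem_filter, Finset.mem_univ, true_and] at hj
      refine hy v ?_
      rcases (hCP j v).mp hv with h | h
      · exact hCNd j hj v h
      · exact hPaNd j (le_of_lt hj) v h
    have E := sum_congr_if (Cb kk) x
      (fun y => marginal p ((Finset.univ.filter fun j : Fin m => (j : ℕ) < k + 1).biUnion Cb) y
        * ∏ j ∈ Finset.univ.filter (fun j : Fin m => (j : ℕ) < k + 1), marginal p (Pa (Cb j)) y)
      (fun y => ∏ j ∈ Finset.univ.filter (fun j : Fin m => (j : ℕ) < k + 1), marginal p (CP j) y)
      (fun y => IH y)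
    rw [sum_out_mul (Cb kk) x
      (fun y => marginal p ((Finset.univ.filter fun j : Fin m => (j : ℕ) < k + 1).biUnion Cb) y)
      (fun y => ∏ j ∈ Finset.univ.filter (fun j : Fin m => (j : ℕ) < k + 1),
        marginal p (Pa (Cb j)) y) hgL, A1] at E
    have E2 := sum_congr_if (Cb kk) x
      (fun y => ∏ j ∈ Finset.univ.filter (fun j : Fin m => (j : ℕ) < k + 1), marginal p (CP j) y)
      (fun y => marginal p (CP kk) y
        * ∏ j ∈ Finset.univ.filter (fun j : Fin m => (j : ℕ) < k), marginal p (CP j) y)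
      (fun y => by rw [hFins, Finset.prod_insert hknotin])
    rw [E2, sum_out_mul (Cb kk) x (fun y => marginal p (CP kk) y)
      (fun y => ∏ j ∈ Finset.univ.filter (fun j : Fin m => (j : ℕ) < k),
        marginal p (CP j) y) hgR, A2] at E
    rw [hFins, Finset.prod_insert hknotin] at E
    have hne : marginal p (Pa (Cb kk)) x ≠ 0 := (marg_pos hpos _ x).ne'
    apply mul_left_cancel₀ hne
    rw [← E]; ring

end Aux

/-- let `p` be strictly positive over variables partitioned into blocks
`C_1, …, C_m` with parent assignment `Pa(C_i) ⊆ C_1 ∪ … ∪ C_{i−1}` and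
`Pa(D) ⊆ Pa(C_i)` for `D ⊆ C_i`.  If `p(V) = Π_i p(C_i | Pa(C_i))` and
`p(D | Pa(C_i)) = p(D | Pa(D))` for every `D ⊆ C_i`, then for every `D ⊆ C_i`:
`D ⊥_p (C_1 ∪ … ∪ C_{i−1}) \ Pa(D) | Pa(D)`.
(Conditional distributions are expressed multiplicatively via marginals.) -/
theorem stmt8 {V : Type*} [Fintype V] [DecidableEq V] {X : V → Type*}
    [∀ v, Fintype (X v)] {m : ℕ}
    (p : (∀ v, X v) → ℝ) (hpos : ∀ x, 0 < p x) (hsum : ∑ x, p x = 1)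
    (Cb : Fin m → Finset V)
    (hcover : (Finset.univ : Finset (Fin m)).biUnion Cb = Finset.univ)
    (hdisj : ∀ i j : Fin m, i ≠ j → Disjoint (Cb i) (Cb j))
    (Pa : Finset V → Finset V)
    (hPaC : ∀ i : Fin m,
      Pa (Cb i) ⊆ (Finset.univ.filter (fun j => j < i)).biUnion Cb)
    (hPaD : ∀ i : Fin m, ∀ D ⊆ Cb i, Pa D ⊆ Pa (Cb i))
    -- (i)  p(V) = Π_i p(C_i | Pa(C_i))
    (hfac : ∀ x, p x * ∏ i : Fin m, marginal p (Pa (Cb i)) x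
        = ∏ i : Fin m, marginal p (Cb i ∪ Pa (Cb i)) x)
    -- (ii)  p(D | Pa(C_i)) = p(D | Pa(D)) for every D ⊆ C_i
    (hcond : ∀ i : Fin m, ∀ D ⊆ Cb i, ∀ x,
      marginal p (D ∪ Pa (Cb i)) x * marginal p (Pa D) x
        = marginal p (D ∪ Pa D) x * marginal p (Pa (Cb i)) x) :
    ∀ i : Fin m, ∀ D ⊆ Cb i,
      CondIndep p D
        (((Finset.univ.filter (fun j => j < i)).biUnion Cb) \ Pa D) (Pa D) := by
  intro i D hD
  intro x
  set NdI : Finset V := (Finset.univ.filter (fun j => j < i)).biUnion Cb with hNdIdef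
  have hNd : NdI = (Finset.univ.filter fun j : Fin m => (j : ℕ) < (i : ℕ)).biUnion Cb := by
    have hfe : (Finset.univ.filter (fun j : Fin m => j < i))
        = Finset.univ.filter (fun j : Fin m => (j : ℕ) < (i : ℕ)) := by
      ext j
      simp only [Finset.mem_filter, Finset.mem_univ, true_and, Fin.lt_def]
    rw [hNdIdef, hfe]
  have key := keyP p hpos Cb hcover hdisj Pa hPaC (fun j => Cb j ∪ Pa (Cb j))
    (fun j v => by simp) hfac
  have hfil : (Finset.univ.filter fun j : Fin m => (j : ℕ) < (i : ℕ) + 1)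
      = insert i (Finset.univ.filter fun j : Fin m => (j : ℕ) < (i : ℕ)) := by
    ext j
    simp only [Finset.mem_insert, Finset.mem_filter, Finset.mem_univ, true_and,
      Nat.lt_succ_iff_lt_or_eq, Fin.ext_iff]
    tauto
  have hnotin : i ∉ (Finset.univ.filter fun j : Fin m => (j : ℕ) < (i : ℕ)) := by simp
  have hDN : ∀ v ∈ NdI, v ∉ Cb i := by
    intro v hv hvi
    rw [hNd] at hv
    obtain ⟨j, hj, hvj⟩ := Finset.mem_biUnion.mp hv
    simp only [Finset.mem_filter, Finset.mem_univ, true_and] at hj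
    have hji : j ≠ i := by intro h; rw [h] at hj; omega
    exact (Finset.disjoint_left.mp (hdisj j i hji) hvj) hvi
  have hPaCiN : Pa (Cb i) ⊆ NdI := hPaC i
  have hPaDN : Pa D ⊆ NdI := (hPaD i D hD).trans hPaCiN
  -- the intermediate conditional independence coming from the factorization
  have E : ∀ z, marginal p (Cb i ∪ NdI) z * marginal p (Pa (Cb i)) z
      = marginal p (Cb i ∪ Pa (Cb i)) z * marginal p NdI z := by
    intro z
    have h1 := key (m - (i : ℕ)) (i : ℕ) (by omega) z
    have h2 := key (m - ((i : ℕ) + 1)) ((i : ℕ) + 1) (by omega) z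
    rw [hfil, Finset.biUnion_insert, Finset.prod_insert hnotin, Finset.prod_insert hnotin,
      ← hNd] at h2
    rw [← hNd] at h1
    have hpp : (0 : ℝ) < ∏ j ∈ Finset.univ.filter (fun j : Fin m => (j : ℕ) < (i : ℕ)),
        marginal p (Pa (Cb j)) z := Finset.prod_pos fun j _ => marg_pos hpos _ z
    apply mul_right_cancel₀ hpp.ne'
    rw [← h1] at h2
    calc marginal p (Cb i ∪ NdI) z * marginal p (Pa (Cb i)) z
          * ∏ j ∈ Finset.univ.filter (fun j : Fin m => (j : ℕ) < (i : ℕ)),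
              marginal p (Pa (Cb j)) z
        = marginal p (Cb i ∪ NdI) z * (marginal p (Pa (Cb i)) z
            * ∏ j ∈ Finset.univ.filter (fun j : Fin m => (j : ℕ) < (i : ℕ)),
                marginal p (Pa (Cb j)) z) := by ring
      _ = marginal p (Cb i ∪ Pa (Cb i)) z * (marginal p NdI z
            * ∏ j ∈ Finset.univ.filter (fun j : Fin m => (j : ℕ) < (i : ℕ)),
                marginal p (Pa (Cb j)) z) := h2
      _ = marginal p (Cb i ∪ Pa (Cb i)) z * marginal p NdI z
            * ∏ j ∈ Finset.univ.filter (fun j : Fin m => (j : ℕ) < (i : ℕ)),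
                marginal p (Pa (Cb j)) z := by ring
  -- sum out the variables of `Cb i \ D`
  have hsubA : Cb i \ D ⊆ Cb i ∪ NdI := Finset.sdiff_subset.trans Finset.subset_union_left
  have hBI : ∀ v, v ∈ D ∪ NdI ↔ v ∈ Cb i ∪ NdI ∧ v ∉ Cb i \ D := by
    intro v
    simp only [Finset.mem_union, Finset.mem_sdiff, not_and, not_not]
    constructor
    · rintro (hv | hv)
      · exact ⟨Or.inl (hD hv), fun _ => hv⟩
      · exact ⟨Or.inr hv, fun hvc => absurd hvc (hDN v hv)⟩
    · rintro ⟨hv | hv, himp⟩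
      · exact Or.inl (himp hv)
      · exact Or.inr hv
  have S1 := sum_out p (Cb i \ D) (Cb i ∪ NdI) (D ∪ NdI) hsubA hBI x
  have hsubA2 : Cb i \ D ⊆ Cb i ∪ Pa (Cb i) :=
    Finset.sdiff_subset.trans Finset.subset_union_left
  have hBI2 : ∀ v, v ∈ D ∪ Pa (Cb i) ↔ v ∈ Cb i ∪ Pa (Cb i) ∧ v ∉ Cb i \ D := by
    intro v
    simp only [Finset.mem_union, Finset.mem_sdiff, not_and, not_not]
    constructor
    · rintro (hv | hv)
      · exact ⟨Or.inl (hD hv), fun _ => hv⟩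
      · exact ⟨Or.inr hv, fun hvc => absurd hvc (hDN v (hPaCiN hv))⟩
    · rintro ⟨hv | hv, himp⟩
      · exact Or.inl (himp hv)
      · exact Or.inr hv
  have S2 := sum_out p (Cb i \ D) (Cb i ∪ Pa (Cb i)) (D ∪ Pa (Cb i)) hsubA2 hBI2 x
  have hg1 : ∀ y, (∀ v, v ∉ Cb i \ D → y v = x v) →
      marginal p (Pa (Cb i)) y = marginal p (Pa (Cb i)) x := fun y hy =>
    marg_agree p _ fun v hv =>
      hy v (fun hvc => hDN v (hPaCiN hv) (Finset.mem_sdiff.mp hvc).1)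
  have hg2 : ∀ y, (∀ v, v ∉ Cb i \ D → y v = x v) →
      marginal p NdI y = marginal p NdI x := fun y hy =>
    marg_agree p _ fun v hv =>
      hy v (fun hvc => hDN v hv (Finset.mem_sdiff.mp hvc).1)
  have E3 := sum_congr_if (Cb i \ D) x
    (fun y => marginal p (Cb i ∪ NdI) y * marginal p (Pa (Cb i)) y)
    (fun y => marginal p (Cb i ∪ Pa (Cb i)) y * marginal p NdI y)
    (fun y => E y)
  rw [sum_out_mul (Cb i \ D) x (fun y => marginal p (Cb i ∪ NdI) y)
      (fun y => marginal p (Pa (Cb i)) y) hg1,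
    sum_out_mul (Cb i \ D) x (fun y => marginal p (Cb i ∪ Pa (Cb i)) y)
      (fun y => marginal p NdI y) hg2, S1, S2] at E3
  -- E3 : marg(D∪NdI) x * marg(PaCi) x = marg(D∪PaCi) x * marg(NdI) x
  have hU1 : D ∪ (NdI \ Pa D) ∪ Pa D = D ∪ NdI := by
    rw [Finset.union_assoc, Finset.sdiff_union_self_eq_union,
      Finset.union_eq_left.mpr hPaDN]
  have hU2 : (NdI \ Pa D) ∪ Pa D = NdI := by
    rw [Finset.sdiff_union_self_eq_union, Finset.union_eq_left.mpr hPaDN]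
  have final : marginal p (D ∪ NdI) x * marginal p (Pa D) x
      = marginal p (D ∪ Pa D) x * marginal p NdI x := by
    apply mul_left_cancel₀ ((marg_pos hpos (Pa (Cb i)) x).ne')
    calc marginal p (Pa (Cb i)) x * (marginal p (D ∪ NdI) x * marginal p (Pa D) x)
        = (marginal p (D ∪ NdI) x * marginal p (Pa (Cb i)) x) * marginal p (Pa D) x := by ring
      _ = (marginal p (D ∪ Pa (Cb i)) x * marginal p NdI x) * marginal p (Pa D) x := by rw [E3]
      _ = (marginal p (D ∪ Pa (Cb i)) x * marginal p (Pa D) x) * marginal p NdI x := by ring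
      _ = (marginal p (D ∪ Pa D) x * marginal p (Pa (Cb i)) x) * marginal p NdI x := by
          rw [hcond i D hD x]
      _ = marginal p (Pa (Cb i)) x * (marginal p (D ∪ Pa D) x * marginal p NdI x) := by ring
  have hv : ∀ w, w ∈ Pa D → w ∈ NdI := fun w hw => hPaDN hw
  convert final using 3
  all_goals
    ext v
    simp only [Finset.mem_union, Finset.mem_sdiff]
    try (specialize hv v; tauto)
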